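/- The set of right-infinite binary words that contain at most two distinct antisquare factors is uncountable. -/

import Mathlib

/-- Bitwise complement of a binary word. -/
def comp (x : List Bool) : List Bool := x.map (fun b => !b)

/-- An antisquare is a nonempty word of the form `y ++ comp y`. -/
def Antisquare (x : List Bool) : Prop := ∃ y : List Bool, y ≠ [] ∧ x = y ++ comp y

/-- `w` has period `p ≥ 1` if `w[i] = w[i+p]` whenever both indices are valid. -/
def HasPeriod (w : List Bool) (p : ℕ) : Prop :=
  1 ≤ p ∧ ∀ i, i + p < w.length → w.getD i false = w.getD (i + p) false

/-- The exponent of a finite word: its length divided by its least period. -/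
noncomputable def exponent (w : List Bool) : ℝ :=
  (w.length : ℝ) / ((sInf {p : ℕ | HasPeriod w p} : ℕ) : ℝ)

/-- `u` is a factor of the right-infinite word `w : ℕ → Bool`. -/
def FactorInf (u : List Bool) (w : ℕ → Bool) : Prop :=
  ∃ i : ℕ, u = (List.range u.length).map (fun t => w (i + t))

/-- `u` is a factor of the bi-infinite word `w : ℤ → Bool`. -/
def FactorBi (u : List Bool) (w : ℤ → Bool) : Prop :=
  ∃ i : ℤ, u = (List.range u.length).map (fun t => w (i + (t : ℤ)))

/-- A binary word is good if its only antisquare factors are `01` and `10`. -/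
def Good (w : List Bool) : Prop :=
  ∀ u, u <:+: w → Antisquare u → u = [false, true] ∨ u = [true, false]

/-! ### Auxiliary construction

For each `s : ℕ → Bool` we build the infinite word whose ones sit at positions
`pos s 0 < pos s 1 < ⋯`, with consecutive gaps `5` or `6` depending on `s`.
Any such word has `01` and `10` as its only antisquare factors, and distinct
`s` give distinct words, so this yields uncountably many words as required. -/

/-- Positions of the ones: gaps of `5` or `6` depending on `s`. -/
def pos (s : ℕ → Bool) : ℕ → ℕ
  | 0 => 0
  | k+1 => pos s k + 5 + (if s k then 1 else 0)

lemma pos_add (s : ℕ → Bool) (k d : ℕ) : pos s k + 5*d ≤ pos s (k+d) := by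
  induction d with
  | zero => simp
  | succ d ih =>
      have h : k + (d+1) = (k+d) + 1 := by omega
      rw [h]
      simp only [pos]; split <;> omega

lemma pos_mono (s : ℕ → Bool) {k l : ℕ} (h : k ≤ l) : pos s k ≤ pos s l := by
  have := pos_add s k (l - k)
  have h2 : k + (l - k) = l := by omega
  rw [h2] at this; omega

lemma le_of_pos_le (s : ℕ → Bool) {k l : ℕ} (h : pos s k ≤ pos s l) : k ≤ l := by
  by_contra hc
  push_neg at hc
  have h1 := pos_add s l (k - l)
  have h2 : l + (k - l) = k := by omega
  rw [h2] at h1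
  have : 1 ≤ k - l := by omega
  nlinarith [this]

open Classical in
/-- The infinite word with ones exactly at the positions `pos s k`. -/
noncomputable def W (s : ℕ → Bool) (m : ℕ) : Bool := if ∃ k, pos s k = m then true else false

lemma W_true_iff (s : ℕ → Bool) (m : ℕ) : W s m = true ↔ ∃ k, pos s k = m := by
  by_cases h : ∃ k, pos s k = m <;> simp [W, h]

lemma pos_congr (s s' : ℕ → Bool) (k : ℕ) (h : ∀ j < k, s j = s' j) :
    pos s k = pos s' k := by
  induction k with
  | zero => rfl
  | succ k ih =>
      simp only [pos]
      rw [ih (fun j hj => h j (by omega)), h k (by omega)]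

lemma W_ne (s s' : ℕ → Bool) (k : ℕ) (h : ∀ j < k, s j = s' j)
    (hs : s k = true) (hs' : s' k = false) : W s ≠ W s' := by
  intro heq
  have hpk : pos s k = pos s' k := pos_congr s s' k h
  set m := pos s k + 6 with hm
  have h1 : W s m = true := by
    rw [W_true_iff]
    exact ⟨k+1, by simp [pos, hs]; omega⟩
  have h2 : W s' m = false := by
    rw [← Bool.not_eq_true, W_true_iff]
    rintro ⟨k', hk'⟩
    rcases lt_trichotomy k' (k+1) with hlt | heq' | hgt
    · have : pos s' k' ≤ pos s' k := pos_mono s' (by omega)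
      omega
    · subst heq'
      have : pos s' (k+1) = pos s' k + 5 := by simp [pos, hs']
      omega
    · have h5 : pos s' (k+1) + 5 ≤ pos s' k' := by
        have h6 := pos_add s' (k+1) (k' - (k+1))
        have he : (k+1) + (k' - (k+1)) = k' := by omega
        rw [he] at h6
        have : 1 ≤ k' - (k+1) := by omega
        nlinarith [this]
      have : pos s' (k+1) = pos s' k + 5 := by simp [pos, hs']
      omega
  rw [heq] at h1
  rw [h1] at h2
  exact Bool.noConfusion h2

lemma W_inj : Function.Injective W := by
  intro s s' heq
  by_contra hne
  have hex : ∃ k, s k ≠ s' k := by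
    by_contra hall
    push_neg at hall
    exact hne (funext hall)
  classical
  set k := Nat.find hex with hkdef
  have hk : s k ≠ s' k := Nat.find_spec hex
  have hmin : ∀ j < k, s j = s' j := fun j hj => by
    have := Nat.find_min hex hj
    simpa using this
  cases hsk : s k <;> cases hsk' : s' k
  · rw [hsk, hsk'] at hk; exact hk rfl
  · exact W_ne s' s k (fun j hj => (hmin j hj).symm) hsk' hsk heq.symm
  · exact W_ne s s' k hmin hsk hsk' heq
  · rw [hsk, hsk'] at hk; exact hk rfl

/-- The only antisquare factors of `W s` are `01` and `10`. -/
lemma antisq (s : ℕ → Bool) :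
    ∀ u, Antisquare u → FactorInf u (W s) → u = [false, true] ∨ u = [true, false] := by
  rintro u ⟨y, hy, rfl⟩ ⟨i, hi⟩
  have hn1 : 1 ≤ y.length := List.length_pos_iff.mpr hy
  have hlen : (comp y).length = y.length := by simp [comp]
  have hL : (y ++ comp y).length = y.length + y.length := by simp [comp]
  have key : ∀ j, j < y.length →
      W s (i + j) = y.getD j false ∧ W s (i + (y.length + j)) = !(y.getD j false) := by
    have hget : ∀ t, t < y.length + y.length → (y ++ comp y).getD t false = W s (i + t) := by
      intro t ht
      rw [hi]
      rw [List.getD_eq_getElem _ _ (by simpa [hL] using ht)]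
      simp
    intro j hj
    constructor
    · rw [← hget j (by omega), List.getD_append _ _ _ _ hj]
    · rw [← hget (y.length + j) (by omega)]
      rw [List.getD_append_right _ _ _ _ (by omega)]
      have h3 : y.length + j - y.length = j := by omega
      rw [h3]
      rw [List.getD_eq_getElem _ _ (by omega), List.getD_eq_getElem _ _ hj]
      simp [comp]
  set n := y.length with hn
  by_cases hone : n = 1
  · obtain ⟨c, rfl⟩ := List.length_eq_one_iff.mp hone
    cases c
    · left; rfl
    · right; rfl
  · exfalso
    have hn2 : 2 ≤ n := by omega
    have hdiff : ∀ j, j < n → W s (i + (n + j)) = !(W s (i + j)) := by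
      intro j hj
      rw [(key j hj).1, (key j hj).2]
    classical
    set T := (Finset.range (n+n)).filter (fun t => W s (i+t) = true) with hT
    set F := (Finset.range (n+n)).filter (fun t => ¬ (W s (i+t) = true)) with hF
    have hTF : T.card + F.card = n+n := by
      rw [hT, hF]
      simpa using
        Finset.card_filter_add_card_filter_not
          (s := Finset.range (n+n)) (fun t => W s (i+t) = true)
    have hmemT : ∀ t, t ∈ T ↔ (t < n+n ∧ W s (i+t) = true) := by
      intro t; simp [hT, Finset.mem_filter]
    have hmemF : ∀ t, t ∈ F ↔ (t < n+n ∧ W s (i+t) = false) := by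
      intro t; simp [hF, Finset.mem_filter]
    have hcard : T.card = F.card := by
      apply Finset.card_nbij' (fun t => if t < n then t+n else t-n)
        (fun t => if t < n then t+n else t-n)
      · intro t ht
        rw [Finset.mem_coe, hmemT] at ht
        rw [Finset.mem_coe, hmemF]
        by_cases hc : t < n
        · simp only [if_pos hc]
          have := hdiff t hc
          rw [ht.2] at this
          constructor
          · omega
          · rw [show t + n = n + t by omega] at *
            simpa using this
        · simp only [if_neg hc]
          have hj : t - n < n := by omega
          have := hdiff (t-n) hj
          rw [show n + (t-n) = t by omega] at this
          rw [ht.2] at this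
          constructor
          · omega
          · simpa using this.symm
      · intro t ht
        rw [Finset.mem_coe, hmemF] at ht
        rw [Finset.mem_coe, hmemT]
        by_cases hc : t < n
        · simp only [if_pos hc]
          have := hdiff t hc
          rw [ht.2] at this
          constructor
          · omega
          · rw [show t + n = n + t by omega]
            simpa using this
        · simp only [if_neg hc]
          have hj : t - n < n := by omega
          have := hdiff (t-n) hj
          rw [show n + (t-n) = t by omega] at this
          rw [ht.2] at this
          constructor
          · omega
          · simpa using this.symm
      · intro t ht
        rw [Finset.mem_coe, hmemT] at ht
        by_cases hc : t < n
        · simp only [if_pos hc, if_neg (by omega : ¬ (t + n < n))]; omega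
        · simp only [if_neg hc, if_pos (by omega : t - n < n)]; omega
      · intro t ht
        rw [Finset.mem_coe, hmemF] at ht
        by_cases hc : t < n
        · simp only [if_pos hc, if_neg (by omega : ¬ (t + n < n))]; omega
        · simp only [if_neg hc, if_pos (by omega : t - n < n)]; omega
    have hTn : T.card = n := by omega
    have hne : T.Nonempty := Finset.card_pos.mp (by omega)
    set tmin := T.min' hne with htmin
    set tmax := T.max' hne with htmax
    have hminT : tmin ∈ T := T.min'_mem hne
    have hmaxT : tmax ∈ T := T.max'_mem hne
    set K : ℕ → ℕ := fun t => if h : ∃ k, pos s k = i + t then Classical.choose h else 0 with hK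
    have hKspec : ∀ t ∈ T, pos s (K t) = i + t := by
      intro t ht
      rw [hmemT] at ht
      have hex := (W_true_iff s (i+t)).mp ht.2
      simp only [hK, dif_pos hex]
      exact Classical.choose_spec hex
    have hKmin := hKspec tmin hminT
    have hKmax := hKspec tmax hmaxT
    have hrange : ∀ t ∈ T, K t ∈ Finset.Icc (K tmin) (K tmax) := by
      intro t ht
      rw [Finset.mem_Icc]
      constructor
      · apply le_of_pos_le s
        rw [hKspec t ht, hKmin]
        have := T.min'_le t ht
        omega
      · apply le_of_pos_le s
        rw [hKspec t ht, hKmax]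
        have := T.le_max' t ht
        omega
    have hinj : Set.InjOn K ↑T := by
      intro a ha b hb hab
      have h1 := hKspec a ha
      have h2 := hKspec b hb
      rw [hab] at h1
      omega
    have hcardle : T.card ≤ (Finset.Icc (K tmin) (K tmax)).card :=
      Finset.card_le_card_of_injOn K hrange hinj
    rw [Nat.card_Icc, hTn] at hcardle
    have hgap := pos_add s (K tmin) (K tmax - K tmin)
    have hle : K tmin ≤ K tmax := by
      apply le_of_pos_le s
      rw [hKmin, hKmax]
      have := T.min'_le tmax hmaxT
      omega
    have heq : K tmin + (K tmax - K tmin) = K tmax := by omega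
    rw [heq, hKmin, hKmax] at hgap
    have htmaxlt : tmax < n + n := ((hmemT tmax).mp hmaxT).1
    omega

lemma uncb (h : Countable (ℕ → Bool)) : False := by
  obtain ⟨f, hf⟩ := h.exists_injective_nat
  classical
  have hg : Function.Injective (fun (A : Set ℕ) (n : ℕ) => decide (n ∈ A)) := by
    intro A B hAB
    ext n
    have := congrFun hAB n
    simpa using this
  exact Function.cantor_injective _ (hf.comp hg)

/-- the set of right-infinite binary words containing at most two
distinct antisquare factors is uncountable. -/
theorem stmt_1 :
    ¬ ({w : ℕ → Bool | ∃ a b : List Bool,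
        ∀ u, Antisquare u → FactorInf u w → u = a ∨ u = b}).Countable := by
  intro hC
  have hsub : Set.range W ⊆ {w : ℕ → Bool | ∃ a b : List Bool,
      ∀ u, Antisquare u → FactorInf u w → u = a ∨ u = b} := by
    rintro w ⟨s, rfl⟩
    exact ⟨[false, true], [true, false], antisq s⟩
  have hcr : (Set.range W).Countable := hC.mono hsub
  have hct : Countable (ℕ → Bool) := by
    haveI := hcr.to_subtype
    exact Countable.of_equiv _ (Equiv.ofInjective W W_inj).symm
  exact uncb hct
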